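/- In the product setting, for any two ω, ω′ ∈ ℝ^d that are strongly generic for the product, one has A^ω = A^{ω′} if and only if π^ω ≡sylv^{m_1,…,m_t} π^{ω′}. -/

import Mathlib

open scoped RealInnerProductSpace

/-- The slope `ρ^ω(i,j)` of the edge from vertex `u i` to vertex `u j`,
with respect to the objective direction `c`. -/
noncomputable def rho {n d : ℕ} (u : Fin n → EuclideanSpace ℝ (Fin d))
    (c ω : EuclideanSpace ℝ (Fin d)) (i j : Fin n) : ℝ :=
  ⟪ω, u j - u i⟫ / ⟪c, u j - u i⟫

/-- `τ^ω(i)`: the maximal slope from vertex `i` to a later vertex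
(the supremum of the finite set of slopes `ρ^ω(i,j)` for `i < j`;
it is meaningful for non-maximal `i`, where this set is nonempty). -/
noncomputable def tau {n d : ℕ} (u : Fin n → EuclideanSpace ℝ (Fin d))
    (c ω : EuclideanSpace ℝ (Fin d)) (i : Fin n) : ℝ :=
  sSup {x : ℝ | ∃ j : Fin n, i < j ∧ x = rho u c ω i j}

/-- `ω` is generic: for each non-maximal vertex `i` there is a unique `j > i`
whose slope attains the maximal slope `τ^ω(i)`. -/
def Generic {n d : ℕ} (u : Fin n → EuclideanSpace ℝ (Fin d))
    (c ω : EuclideanSpace ℝ (Fin d)) : Prop :=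
  ∀ i : Fin n, (i : ℕ) + 1 < n →
    ∃! j : Fin n, i < j ∧ rho u c ω i j = tau u c ω i

/-- `A` is the max-slope arborescence `A^ω`: it fixes the maximal vertex, and
sends every other vertex `i` to an improving neighbour attaining `τ^ω(i)`. -/
def IsArbo {n d : ℕ} (u : Fin n → EuclideanSpace ℝ (Fin d))
    (c ω : EuclideanSpace ℝ (Fin d)) (A : Fin n → Fin n) : Prop :=
  (∀ i : Fin n, (i : ℕ) + 1 = n → A i = i) ∧
  (∀ i : Fin n, (i : ℕ) + 1 < n →
    i < A i ∧ rho u c ω i (A i) = tau u c ω i)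

/-- The top vertex `(n_1, …, n_t)` of the product polytope. -/
def topVertex {t : ℕ} (m : Fin t → ℕ) : ∀ s : Fin t, Fin (m s + 1) :=
  fun s => Fin.last (m s)

/-- The maximal slope at a vertex `v` of the product polytope: the supremum of
the slopes to improving neighbours, i.e. of the `ρ^{ω_s}(v_s, j)` for `j > v_s`
(a finite set, nonempty when `v` is not the top vertex). -/
noncomputable def prodTau {t : ℕ} {m d : Fin t → ℕ}
    (u : ∀ s : Fin t, Fin (m s + 1) → EuclideanSpace ℝ (Fin (d s)))
    (c ω : ∀ s : Fin t, EuclideanSpace ℝ (Fin (d s)))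
    (v : ∀ s : Fin t, Fin (m s + 1)) : ℝ :=
  sSup {x : ℝ | ∃ s : Fin t, ∃ j : Fin (m s + 1),
    v s < j ∧ x = rho (u s) (c s) (ω s) (v s) j}

/-- `ω` is generic for the product: at each vertex other than the top vertex,
the maximal slope is attained by a unique improving neighbour (encoded by the
coordinate `s` that moves and its new value `j`). -/
def ProdGeneric {t : ℕ} {m d : Fin t → ℕ}
    (u : ∀ s : Fin t, Fin (m s + 1) → EuclideanSpace ℝ (Fin (d s)))
    (c ω : ∀ s : Fin t, EuclideanSpace ℝ (Fin (d s))) : Prop :=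
  ∀ v : ∀ s : Fin t, Fin (m s + 1), v ≠ topVertex m →
    ∃! p : (s : Fin t) × Fin (m s + 1),
      v p.1 < p.2 ∧ rho (u p.1) (c p.1) (ω p.1) (v p.1) p.2 = prodTau u c ω v

/-- `A` is the max-slope arborescence `A^ω` of the product: it fixes the top
vertex, and sends every other vertex `v` to an improving neighbour (differing
from `v` in a single, increased, coordinate) attaining the maximal slope. -/
def ProdIsArbo {t : ℕ} {m d : Fin t → ℕ}
    (u : ∀ s : Fin t, Fin (m s + 1) → EuclideanSpace ℝ (Fin (d s)))
    (c ω : ∀ s : Fin t, EuclideanSpace ℝ (Fin (d s)))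
    (A : (∀ s : Fin t, Fin (m s + 1)) → ∀ s : Fin t, Fin (m s + 1)) : Prop :=
  A (topVertex m) = topVertex m ∧
  ∀ v : ∀ s : Fin t, Fin (m s + 1), v ≠ topVertex m → ∃ s : Fin t,
    v s < A v s ∧ (∀ r : Fin t, r ≠ s → A v r = v r) ∧
    rho (u s) (c s) (ω s) (v s) (A v s) = prodTau u c ω v

/-- The product slope map `Θ`, sending `ω = (ω_1, …, ω_t)` to the concatenation
of the slope vectors of its factors: its coordinates are indexed by the
disjoint union `Σ s, [m_s]`, ordered lexicographically (which is the canonical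
order-isomorphism with `[m]`, `m = m_1 + ⋯ + m_t`, identifying `(s, i)` with
`M_{s-1} + i`). -/
noncomputable def prodTheta {t : ℕ} {m d : Fin t → ℕ}
    (u : ∀ s : Fin t, Fin (m s + 1) → EuclideanSpace ℝ (Fin (d s)))
    (c : ∀ s : Fin t, EuclideanSpace ℝ (Fin (d s)))
    (ω : ∀ s : Fin t, EuclideanSpace ℝ (Fin (d s))) :
    Lex ((s : Fin t) × Fin (m s)) → ℝ :=
  fun q => tau (u (ofLex q).1) (c (ofLex q).1) (ω (ofLex q).1)
    (Fin.castSucc (ofLex q).2)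

/-- `ω` is strongly generic for the product: it is generic for the product and
the `m = m_1 + ⋯ + m_t` coordinates of `Θ(ω)` are pairwise distinct. -/
def ProdStronglyGeneric {t : ℕ} {m d : Fin t → ℕ}
    (u : ∀ s : Fin t, Fin (m s + 1) → EuclideanSpace ℝ (Fin (d s)))
    (c ω : ∀ s : Fin t, EuclideanSpace ℝ (Fin (d s))) : Prop :=
  ProdGeneric u c ω ∧ Function.Injective (prodTheta u c ω)

/-- One step of the `(m_1, …, m_t)`-sylvester rewriting rule on permutations of
`[m] ≅ Σₗ s, [m_s]` (in one-line notation): the letters at two consecutive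
positions `a ⋖ b` may be exchanged whenever they lie in the same block `s` and
some letter strictly between them in value appears at an earlier position
(`U j V i k W ≡ U j V k i W` for letters `i < j < k` with `i, k` — hence `j` —
in the same block). -/
def SylvRelT {t : ℕ} {m : Fin t → ℕ}
    (π π' : Equiv.Perm (Lex ((s : Fin t) × Fin (m s)))) : Prop :=
  ∃ a b : Lex ((s : Fin t) × Fin (m s)), a ⋖ b ∧ π' = π * Equiv.swap a b ∧
    (ofLex (π a)).1 = (ofLex (π b)).1 ∧
    ∃ e : Lex ((s : Fin t) × Fin (m s)),
      e < a ∧ min (π a) (π b) < π e ∧ π e < max (π a) (π b)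

/-- The `(m_1, …, m_t)`-sylvester congruence: the equivalence relation
generated by the `(m_1, …, m_t)`-sylvester rewriting rule. -/
def SylvT {t : ℕ} {m : Fin t → ℕ} :
    Equiv.Perm (Lex ((s : Fin t) × Fin (m s))) →
      Equiv.Perm (Lex ((s : Fin t) × Fin (m s))) → Prop :=
  Relation.EqvGen SylvRelT

theorem Equiv.Perm.apply_inv_self {α : Type*} (f : Equiv.Perm α) (x : α) : f (f⁻¹ x) = x :=
  f.apply_symm_apply x

theorem Equiv.Perm.inv_apply_self {α : Type*} (f : Equiv.Perm α) (x : α) : f⁻¹ (f x) = x :=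
  f.symm_apply_apply x

section Aux
open Finset

variable {t : ℕ} {m : Fin t → ℕ}

abbrev QL (t : ℕ) (m : Fin t → ℕ) := Lex ((s : Fin t) × Fin (m s))

lemma aux_lex_lt_same {s : Fin t} {i j : Fin (m s)} :
    (toLex ⟨s, i⟩ : QL t m) < toLex ⟨s, j⟩ ↔ i < j := by
  rw [Sigma.Lex.lt_def]
  constructor
  · rintro (h | ⟨h, h2⟩)
    · exact absurd h (lt_irrefl s)
    · exact h2
  · intro h; exact Or.inr ⟨rfl, h⟩

lemma aux_lex_between {s : Fin t} {i k : Fin (m s)} {z : QL t m}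
    (h1 : (toLex ⟨s, i⟩ : QL t m) < z) (h2 : z < toLex ⟨s, k⟩) :
    ∃ j : Fin (m s), z = toLex ⟨s, j⟩ ∧ i < j ∧ j < k := by
  obtain ⟨r, jz⟩ := z
  change (toLex ⟨s, i⟩ : QL t m) < toLex ⟨r, jz⟩ at h1
  change (toLex ⟨r, jz⟩ : QL t m) < toLex ⟨s, k⟩ at h2
  rw [Sigma.Lex.lt_def] at h1 h2
  rcases h1 with h1 | ⟨h1, h1'⟩
  · rcases h2 with h2 | ⟨h2, h2'⟩
    · exact absurd (h1.trans h2) (lt_irrefl s)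
    · exact absurd (h1.trans_le (le_of_eq h2)) (lt_irrefl s)
  · rcases h2 with h2 | ⟨h2, h2'⟩
    · exact absurd (lt_of_le_of_lt (le_of_eq h1) h2) (lt_irrefl s)
    · cases h1
      exact ⟨jz, rfl, h1', h2'⟩
end Aux

section Comb
open Finset
variable {t : ℕ} {m : Fin t → ℕ}

/-- transfer of `min'` between two finsets agreeing below a common element -/
lemma aux_min'_eq {α : Type*} [LinearOrder α] {S S' : Finset α}
    (hS : S.Nonempty) (hS' : S'.Nonempty) (w : α) (hwS : w ∈ S) (hwS' : w ∈ S')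
    (h : ∀ z, z ≤ w → (z ∈ S ↔ z ∈ S')) : S.min' hS = S'.min' hS' := by
  apply le_antisymm
  · exact Finset.min'_le _ _ ((h _ ((Finset.min'_le _ _ hwS').trans le_rfl)).mpr
      (Finset.min'_mem _ hS'))
  · exact Finset.min'_le _ _ ((h _ ((Finset.min'_le _ _ hwS).trans le_rfl)).mp
      (Finset.min'_mem _ hS))

/-- a strictly monotone permutation of a finite linear order is the identity -/
lemma aux_perm_strictMono_eq_one {α : Type*} [LinearOrder α] [Fintype α]
    (g : Equiv.Perm α) (hg : StrictMono g) : g = 1 := by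
  have h1 : ∀ x, x ≤ g x := by
    intro x
    induction x using WellFoundedLT.induction with
    | ind x ih =>
      by_contra h
      push_neg at h
      exact absurd (ih (g x) h) (not_le.mpr (hg h))
  have hgs : StrictMono g.symm := by
    intro a b hab
    have := hg.lt_iff_lt (a := g.symm a) (b := g.symm b)
    simp only [Equiv.apply_symm_apply] at this
    exact this.mp hab
  have h2 : ∀ x, x ≤ g.symm x := by
    intro x
    induction x using WellFoundedLT.induction with
    | ind x ih =>
      by_contra h
      push_neg at h
      exact absurd (ih (g.symm x) h) (not_le.mpr (hgs h))
  ext x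
  have := h2 (g x)
  simp only [Equiv.symm_apply_apply] at this
  exact (le_antisymm (h1 x) this).symm

lemma aux_cov_lt_left {α : Type*} [LinearOrder α] {a b p : α} (hab : a ⋖ b)
    (hpa : p ≠ a) (hpb : p ≠ b) : p < a ↔ p < b := by
  constructor
  · exact fun h => h.trans hab.lt
  · intro h
    rcases lt_trichotomy p a with h' | h' | h'
    · exact h'
    · exact absurd h' hpa
    · exact absurd h (hab.2 h')

lemma aux_cov_lt_right {α : Type*} [LinearOrder α] {a b p : α} (hab : a ⋖ b)
    (hpa : p ≠ a) (hpb : p ≠ b) : a < p ↔ b < p := by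
  constructor
  · intro h
    rcases lt_trichotomy b p with h' | h' | h'
    · exact h'
    · exact absurd h'.symm hpb
    · exact absurd h' (hab.2 h)
  · exact fun h => hab.lt.trans h

/-- comparisons of positions are preserved by swapping a covering pair,
except for the pair itself. -/
lemma aux_swap_cmp {α : Type*} [LinearOrder α] {inst : DecidableEq α} {a b : α} (hab : a ⋖ b)
    {p p' : α} (h1 : ¬(p = a ∧ p' = b)) (h2 : ¬(p = b ∧ p' = a)) :
    @Equiv.swap α inst a b p < @Equiv.swap α inst a b p' ↔ p < p' := by
  by_cases hpp' : p = p'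
  · subst hpp'; simp
  by_cases hpa : p = a
  · by_cases hp'b : p' = b
    · exact absurd ⟨hpa, hp'b⟩ h1
    · have hp'a : p' ≠ a := fun h => hpp' (hpa.trans h.symm)
      rw [hpa, Equiv.swap_apply_left, Equiv.swap_apply_of_ne_of_ne hp'a hp'b]
      exact (aux_cov_lt_right hab hp'a hp'b).symm
  by_cases hpb : p = b
  · by_cases hp'a : p' = a
    · exact absurd ⟨hpb, hp'a⟩ h2
    · have hp'b : p' ≠ b := fun h => hpp' (hpb.trans h.symm)
      rw [hpb, Equiv.swap_apply_right, Equiv.swap_apply_of_ne_of_ne hp'a hp'b]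
      exact aux_cov_lt_right hab hp'a hp'b
  by_cases hp'a : p' = a
  · rw [hp'a, Equiv.swap_apply_left, Equiv.swap_apply_of_ne_of_ne hpa hpb]
    exact (aux_cov_lt_left hab hpa hpb).symm
  by_cases hp'b : p' = b
  · rw [hp'b, Equiv.swap_apply_right, Equiv.swap_apply_of_ne_of_ne hpa hpb]
    exact aux_cov_lt_left hab hpa hpb
  rw [Equiv.swap_apply_of_ne_of_ne hpa hpb, Equiv.swap_apply_of_ne_of_ne hp'a hp'b]

end Comb

section NS
open Finset
variable {t : ℕ} {m : Fin t → ℕ}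

/-- the set of candidate "next smaller" targets of letter `(s,i)` w.r.t. an
order relation `F` on letters. -/
noncomputable def NSset (F : QL t m → QL t m → Prop) (s : Fin t) (i : Fin (m s)) :
    Finset (Fin (m s + 1)) :=
  letI := Classical.propDecidable
  Finset.univ.filter (fun j => Fin.castSucc i < j ∧ (j = Fin.last (m s) ∨
    ∃ j' : Fin (m s), Fin.castSucc j' = j ∧ F (toLex ⟨s, j'⟩) (toLex ⟨s, i⟩)))

lemma mem_NSset {F : QL t m → QL t m → Prop} {s : Fin t} {i : Fin (m s)}
    {j : Fin (m s + 1)} :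
    j ∈ NSset F s i ↔ Fin.castSucc i < j ∧ (j = Fin.last (m s) ∨
      ∃ j' : Fin (m s), Fin.castSucc j' = j ∧ F (toLex ⟨s, j'⟩) (toLex ⟨s, i⟩)) := by
  classical
  simp [NSset]

lemma last_mem_NSset {F : QL t m → QL t m → Prop} {s : Fin t} {i : Fin (m s)} :
    Fin.last (m s) ∈ NSset F s i :=
  mem_NSset.mpr ⟨Fin.castSucc_lt_last i, Or.inl rfl⟩

lemma NSset_nonempty (F : QL t m → QL t m → Prop) (s : Fin t) (i : Fin (m s)) :
    (NSset F s i).Nonempty := ⟨_, last_mem_NSset⟩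

/-- the "next smaller element" map determined by the order `F` on letters. -/
noncomputable def NS (F : QL t m → QL t m → Prop) (s : Fin t) (i : Fin (m s)) :
    Fin (m s + 1) :=
  (NSset F s i).min' (NSset_nonempty F s i)

lemma NS_congr {F G : QL t m → QL t m → Prop} (h : ∀ q q', F q q' ↔ G q q')
    (s : Fin t) (i : Fin (m s)) : NS F s i = NS G s i := by
  have : F = G := by funext q q'; exact propext (h q q')
  rw [this]

/-- the order on letters induced by the positions assigned by `π`. -/
def Rord (π : Equiv.Perm (QL t m)) : QL t m → QL t m → Prop :=
  fun q q' => π⁻¹ q < π⁻¹ q'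

def CrossEq (π π' : Equiv.Perm (QL t m)) : Prop :=
  ∀ q q' : QL t m, (ofLex q).1 ≠ (ofLex q').1 → (Rord π q q' ↔ Rord π' q q')

def InvEq (π π' : Equiv.Perm (QL t m)) : Prop :=
  CrossEq π π' ∧ ∀ (s : Fin t) (i : Fin (m s)), NS (Rord π) s i = NS (Rord π') s i

end NS

section Inv
open Finset
variable {t : ℕ} {m : Fin t → ℕ}

lemma aux_min'_congr {α : Type*} [LinearOrder α] {S S' : Finset α}
    (hS : S.Nonempty) (hS' : S'.Nonempty) (h : S = S') : S.min' hS = S'.min' hS' := by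
  subst h; rfl

lemma invEq_of_sylvRel {π π' : Equiv.Perm (QL t m)} (h : SylvRelT π π') :
    InvEq π π' := by
  obtain ⟨a, b, hab, hπ', hblk, e, hea, hmin, hmax⟩ := h
  subst hπ'
  have hpos : ∀ q : QL t m, (π * Equiv.swap a b)⁻¹ q = Equiv.swap a b (π⁻¹ q) := by
    intro q
    simp [mul_inv_rev, Equiv.Perm.mul_apply]
  have hinvq : ∀ q : QL t m, π⁻¹ q = a ↔ q = π a := by
    intro q
    constructor
    · intro hh; rw [← hh]; simp
    · intro hh; rw [hh]; simp
  have hinvq' : ∀ q : QL t m, π⁻¹ q = b ↔ q = π b := by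
    intro q
    constructor
    · intro hh; rw [← hh]; simp
    · intro hh; rw [hh]; simp
  have cmp : ∀ q q' : QL t m, ¬(q = π a ∧ q' = π b) → ¬(q = π b ∧ q' = π a) →
      (Rord (π * Equiv.swap a b) q q' ↔ Rord π q q') := by
    intro q q' h1 h2
    unfold Rord
    rw [hpos, hpos]
    exact aux_swap_cmp hab
      (fun hh => h1 ⟨(hinvq _).mp hh.1, (hinvq' _).mp hh.2⟩)
      (fun hh => h2 ⟨(hinvq' _).mp hh.1, (hinvq _).mp hh.2⟩)
  have hxyne : π a ≠ π b := fun hh => hab.lt.ne (π.injective hh)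
  constructor
  · intro q q' hqq'
    have h1 : ¬(q = π a ∧ q' = π b) := by
      rintro ⟨rfl, rfl⟩; exact hqq' hblk
    have h2 : ¬(q = π b ∧ q' = π a) := by
      rintro ⟨rfl, rfl⟩; exact hqq' hblk.symm
    exact (cmp q q' h1 h2).symm
  · intro s i
    rcases hxe : ofLex (π a) with ⟨sx, ix⟩
    rcases hye : ofLex (π b) with ⟨sy, iy⟩
    have hxx : π a = toLex ⟨sx, ix⟩ := congrArg toLex hxe
    have hyy : π b = toLex ⟨sy, iy⟩ := congrArg toLex hye
    have hss : sx = sy := by rw [hxe, hye] at hblk; exact hblk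
    subst hss
    -- the case where the letter (s,i) is not one of the two swapped letters
    by_cases hPa : toLex ⟨s, i⟩ = π a
    · -- (s,i) is the letter x = π a;  s = sx, i = ix
      obtain ⟨rfl, hh⟩ := Sigma.mk.inj_iff.mp (toLex.injective (hPa.trans hxx))
      have hix : i = ix := eq_of_heq hh
      subst hix
      rcases lt_or_gt_of_ne (fun hh : i = iy => hxyne (hPa.symm.trans (by rw [hh, ← hyy]))) with hlt | hgt
      · -- i < iy : use the witness letter
        have hxy : π a < π b := by
          rw [hxx, hyy]; exact aux_lex_lt_same.mpr hlt
        rw [min_eq_left hxy.le] at hmin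
        rw [max_eq_right hxy.le] at hmax
        rw [← hPa] at hmin
        rw [hyy] at hmax
        obtain ⟨jw, hjw, hijw, hjwiy⟩ := aux_lex_between hmin hmax
        have henea : e ≠ a := hea.ne
        have heneb : e ≠ b := (hea.trans hab.lt).ne
        have hFw : Rord π (toLex ⟨s, jw⟩) (toLex ⟨s, i⟩) := by
          unfold Rord
          rw [hPa, ← hjw]
          simp only [Equiv.Perm.inv_apply_self]
          exact hea
        have hFw' : Rord (π * Equiv.swap a b) (toLex ⟨s, jw⟩) (toLex ⟨s, i⟩) := by
          unfold Rord
          rw [hPa, ← hjw, hpos, hpos]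
          simp only [Equiv.Perm.inv_apply_self]
          rw [Equiv.swap_apply_of_ne_of_ne henea heneb, Equiv.swap_apply_left]
          exact hea.trans hab.lt
        apply aux_min'_eq _ _ (Fin.castSucc jw)
        · exact mem_NSset.mpr ⟨Fin.castSucc_lt_castSucc_iff.mpr hijw,
            Or.inr ⟨jw, rfl, hFw⟩⟩
        · exact mem_NSset.mpr ⟨Fin.castSucc_lt_castSucc_iff.mpr hijw,
            Or.inr ⟨jw, rfl, hFw'⟩⟩
        · intro z hz
          rw [mem_NSset, mem_NSset]
          apply and_congr_right
          intro hzi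
          apply or_congr Iff.rfl
          apply exists_congr
          intro j'
          apply and_congr_right
          intro hj'
          refine (cmp _ _ ?_ ?_).symm
          · rintro ⟨-, hq'⟩; exact hxyne (hPa.symm.trans hq')
          · rintro ⟨hq, -⟩
            obtain ⟨-, hh2⟩ := Sigma.mk.inj_iff.mp (toLex.injective (hq.trans hyy))
            have : j' = iy := eq_of_heq hh2
            subst this
            rw [← hj'] at hz
            exact absurd (Fin.castSucc_lt_castSucc_iff.mp (lt_of_le_of_lt hz
              (Fin.castSucc_lt_castSucc_iff.mpr hjwiy))) (lt_irrefl _)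
      · -- iy < i : the two sets are equal
        apply aux_min'_congr
        ext j
        rw [mem_NSset, mem_NSset]
        apply and_congr_right
        intro hj
        apply or_congr Iff.rfl
        apply exists_congr
        intro j'
        apply and_congr_right
        intro hj'
        refine (cmp _ _ ?_ ?_).symm
        · rintro ⟨-, hq'⟩; exact hxyne (hPa.symm.trans hq')
        · rintro ⟨hq, -⟩
          obtain ⟨-, hh2⟩ := Sigma.mk.inj_iff.mp (toLex.injective (hq.trans hyy))
          have : j' = iy := eq_of_heq hh2
          subst this
          rw [← hj'] at hj
          exact absurd (Fin.castSucc_lt_castSucc_iff.mp hj) (not_lt.mpr hgt.le)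
    · by_cases hPb : toLex ⟨s, i⟩ = π b
      · -- (s,i) is the letter y = π b;  s = sx, i = iy
        obtain ⟨rfl, hh⟩ := Sigma.mk.inj_iff.mp (toLex.injective (hPb.trans hyy))
        have hiy : i = iy := eq_of_heq hh
        subst hiy
        rcases lt_or_gt_of_ne (fun hh : i = ix => hPa (by rw [hh, ← hxx])) with hlt | hgt
        · -- i < ix : use the witness letter
          have hxy : π b < π a := by
            rw [hxx, hyy]; exact aux_lex_lt_same.mpr hlt
          rw [min_eq_right hxy.le] at hmin
          rw [max_eq_left hxy.le] at hmax
          rw [← hPb] at hmin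
          rw [hxx] at hmax
          obtain ⟨jw, hjw, hijw, hjwix⟩ := aux_lex_between hmin hmax
          have henea : e ≠ a := hea.ne
          have heneb : e ≠ b := (hea.trans hab.lt).ne
          have hFw : Rord π (toLex ⟨s, jw⟩) (toLex ⟨s, i⟩) := by
            unfold Rord
            rw [hPb, ← hjw]
            simp only [Equiv.Perm.inv_apply_self]
            exact hea.trans hab.lt
          have hFw' : Rord (π * Equiv.swap a b) (toLex ⟨s, jw⟩) (toLex ⟨s, i⟩) := by
            unfold Rord
            rw [hPb, ← hjw, hpos, hpos]
            simp only [Equiv.Perm.inv_apply_self]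
            rw [Equiv.swap_apply_of_ne_of_ne henea heneb, Equiv.swap_apply_right]
            exact hea
          apply aux_min'_eq _ _ (Fin.castSucc jw)
          · exact mem_NSset.mpr ⟨Fin.castSucc_lt_castSucc_iff.mpr hijw,
              Or.inr ⟨jw, rfl, hFw⟩⟩
          · exact mem_NSset.mpr ⟨Fin.castSucc_lt_castSucc_iff.mpr hijw,
              Or.inr ⟨jw, rfl, hFw'⟩⟩
          · intro z hz
            rw [mem_NSset, mem_NSset]
            apply and_congr_right
            intro hzi
            apply or_congr Iff.rfl
            apply exists_congr
            intro j'
            apply and_congr_right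
            intro hj'
            refine (cmp _ _ ?_ ?_).symm
            · rintro ⟨hq, -⟩
              obtain ⟨-, hh2⟩ := Sigma.mk.inj_iff.mp (toLex.injective (hq.trans hxx))
              have : j' = ix := eq_of_heq hh2
              subst this
              rw [← hj'] at hz
              exact absurd (Fin.castSucc_lt_castSucc_iff.mp (lt_of_le_of_lt hz
                (Fin.castSucc_lt_castSucc_iff.mpr hjwix))) (lt_irrefl _)
            · rintro ⟨-, hq'⟩; exact hxyne (hPb.symm.trans hq').symm
        · -- ix < i : the two sets are equal
          apply aux_min'_congr
          ext j
          rw [mem_NSset, mem_NSset]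
          apply and_congr_right
          intro hj
          apply or_congr Iff.rfl
          apply exists_congr
          intro j'
          apply and_congr_right
          intro hj'
          refine (cmp _ _ ?_ ?_).symm
          · rintro ⟨hq, -⟩
            obtain ⟨-, hh2⟩ := Sigma.mk.inj_iff.mp (toLex.injective (hq.trans hxx))
            have : j' = ix := eq_of_heq hh2
            subst this
            rw [← hj'] at hj
            exact absurd (Fin.castSucc_lt_castSucc_iff.mp hj) (not_lt.mpr hgt.le)
          · rintro ⟨-, hq'⟩; exact hxyne (hPb.symm.trans hq').symm
      · -- (s,i) is neither swapped letter : the two sets are equal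
        apply aux_min'_congr
        ext j
        rw [mem_NSset, mem_NSset]
        apply and_congr_right
        intro hj
        apply or_congr Iff.rfl
        apply exists_congr
        intro j'
        apply and_congr_right
        intro hj'
        refine (cmp _ _ ?_ ?_).symm
        · rintro ⟨-, hq'⟩; exact hPb hq'
        · rintro ⟨-, hq'⟩; exact hPa hq'

end Inv

section Complete
open Finset
variable {t : ℕ} {m : Fin t → ℕ}

noncomputable def Dset (π π' : Equiv.Perm (QL t m)) : Finset (QL t m × QL t m) :=
  letI := Classical.propDecidable
  Finset.univ.filter (fun p => π⁻¹ p.1 < π⁻¹ p.2 ∧ π'⁻¹ p.2 < π'⁻¹ p.1)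

lemma mem_Dset {π π' : Equiv.Perm (QL t m)} {p : QL t m × QL t m} :
    p ∈ Dset π π' ↔ π⁻¹ p.1 < π⁻¹ p.2 ∧ π'⁻¹ p.2 < π'⁻¹ p.1 := by
  classical
  simp [Dset]

noncomputable def Iooq (a b : QL t m) : Finset (QL t m) :=
  letI := Classical.propDecidable
  Finset.univ.filter (fun w => a < w ∧ w < b)

lemma mem_Iooq {a b w : QL t m} : w ∈ Iooq a b ↔ a < w ∧ w < b := by
  classical
  simp [Iooq]

lemma eq_of_Dset_empty {π π' : Equiv.Perm (QL t m)} (h : Dset π π' = ∅) : π = π' := by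
  have key : ∀ p p' : QL t m, p < p' → π'⁻¹ (π p) < π'⁻¹ (π p') := by
    intro p p' hpp'
    by_contra hc
    have hne : π'⁻¹ (π p') ≠ π'⁻¹ (π p) := by
      intro hh
      exact hpp'.ne (π.injective (π'⁻¹.injective hh)).symm
    have hlt : π'⁻¹ (π p') < π'⁻¹ (π p) := lt_of_le_of_ne (not_lt.mp hc) hne
    have : (π p, π p') ∈ Dset π π' := by
      rw [mem_Dset]
      simp only [Equiv.Perm.inv_apply_self]
      exact ⟨hpp', hlt⟩
    rw [h] at this
    exact absurd this (Finset.notMem_empty _)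
  have hsm : StrictMono ⇑(π.trans π'.symm) := by
    intro p p' hpp'
    simpa [Equiv.Perm.inv_def] using key p p' hpp'
  have h1 : π.trans π'.symm = 1 := aux_perm_strictMono_eq_one _ hsm
  ext q
  have := congrArg (fun g : Equiv.Perm (QL t m) => g q) h1
  simp only [Equiv.trans_apply, Equiv.Perm.one_apply] at this
  exact (Equiv.symm_apply_eq π').mp this

lemma sylvT_of_invEq_aux : ∀ (N : ℕ) (π π' : Equiv.Perm (QL t m)), InvEq π π' →
    (Dset π π').card ≤ N → SylvT π π' := by
  intro N
  induction N with
  | zero =>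
    intro π π' _ hcard
    have : π = π' := eq_of_Dset_empty (Finset.card_eq_zero.mp (Nat.le_zero.mp hcard))
    rw [this]
    exact Relation.EqvGen.refl π'
  | succ N ih =>
    intro π π' hInv hcard
    rcases Finset.eq_empty_or_nonempty (Dset π π') with hD | hD
    · rw [eq_of_Dset_empty hD]
      exact Relation.EqvGen.refl π'
    obtain ⟨p0, hp0, hminim⟩ := (Dset π π').exists_min_image
      (fun p => (Iooq (π⁻¹ p.1) (π⁻¹ p.2)).card) hD
    set x := p0.1 with hx0
    set y := p0.2 with hy0
    set a := π⁻¹ x with ha0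
    set b := π⁻¹ y with hb0
    obtain ⟨hab, hba'⟩ := mem_Dset.mp hp0
    have hπa : π a = x := Equiv.Perm.apply_inv_self π x
    have hπb : π b = y := Equiv.Perm.apply_inv_self π y
    have hxyne : x ≠ y := fun hh => hab.ne (congrArg (⇑π⁻¹) hh)
    -- the pair occupies consecutive positions
    have hcov : a ⋖ b := by
      refine ⟨hab, fun w hw1 hw2 => ?_⟩
      have hzx : π w ≠ x := fun hh => hw1.ne (by rw [← hπa] at hh; exact (π.injective hh).symm)
      have hzy : π w ≠ y := fun hh => hw2.ne (by rw [← hπb] at hh; exact π.injective hh)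
      have h1 : π'⁻¹ x < π'⁻¹ (π w) := by
        by_contra hc
        have hlt : π'⁻¹ (π w) < π'⁻¹ x :=
          lt_of_le_of_ne (not_lt.mp hc) (fun hh => hzx (π'⁻¹.injective hh))
        have hmem : (x, π w) ∈ Dset π π' := by
          rw [mem_Dset]
          simp only [Equiv.Perm.inv_apply_self]
          exact ⟨hw1, hlt⟩
        have := hminim _ hmem
        simp only [Equiv.Perm.inv_apply_self] at this
        have hssub : Iooq a w ⊂ Iooq a b := by
          refine ⟨fun z hz => mem_Iooq.mpr ⟨(mem_Iooq.mp hz).1, (mem_Iooq.mp hz).2.trans hw2⟩,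
            fun hsup => ?_⟩
          have := hsup (mem_Iooq.mpr ⟨hw1, hw2⟩)
          exact absurd (mem_Iooq.mp this).2 (lt_irrefl w)
        exact absurd this (not_le.mpr (Finset.card_lt_card hssub))
      have h2 : π'⁻¹ (π w) < π'⁻¹ y := by
        by_contra hc
        have hlt : π'⁻¹ y < π'⁻¹ (π w) :=
          lt_of_le_of_ne (not_lt.mp hc) (fun hh => hzy (π'⁻¹.injective hh).symm)
        have hmem : (π w, y) ∈ Dset π π' := by
          rw [mem_Dset]
          simp only [Equiv.Perm.inv_apply_self]
          exact ⟨hw2, hlt⟩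
        have := hminim _ hmem
        simp only [Equiv.Perm.inv_apply_self] at this
        have hssub : Iooq w b ⊂ Iooq a b := by
          refine ⟨fun z hz => mem_Iooq.mpr ⟨hw1.trans (mem_Iooq.mp hz).1, (mem_Iooq.mp hz).2⟩,
            fun hsup => ?_⟩
          have := hsup (mem_Iooq.mpr ⟨hw1, hw2⟩)
          exact absurd (mem_Iooq.mp this).1 (lt_irrefl w)
        exact absurd this (not_le.mpr (Finset.card_lt_card hssub))
      exact absurd (h1.trans h2) (not_lt.mpr hba'.le)
    -- the two letters lie in the same block
    have hblk : (ofLex x).1 = (ofLex y).1 := by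
      by_contra hne
      have := (hInv.1 x y hne).mp hab
      exact absurd this (not_lt.mpr hba'.le)
    rcases hxe : ofLex x with ⟨sx, ix⟩
    rcases hye : ofLex y with ⟨sy, iy⟩
    have hss : sx = sy := by rw [hxe, hye] at hblk; exact hblk
    subst hss
    have hxX : x = toLex ⟨sx, ix⟩ := congrArg toLex hxe
    have hyY : y = toLex ⟨sx, iy⟩ := congrArg toLex hye
    have hixy : ix ≠ iy := fun hh => hxyne (by rw [hxX, hyY, hh])
    have hpos : ∀ q : QL t m, (π * Equiv.swap a b)⁻¹ q = Equiv.swap a b (π⁻¹ q) := by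
      intro q
      simp [mul_inv_rev, Equiv.Perm.mul_apply]
    have hinvq : ∀ q : QL t m, π⁻¹ q = a ↔ q = x := by
      intro q
      constructor
      · intro hh; rw [← hπa, ← hh]; exact (Equiv.Perm.apply_inv_self π q).symm
      · intro hh; rw [hh]
    have hinvq' : ∀ q : QL t m, π⁻¹ q = b ↔ q = y := by
      intro q
      constructor
      · intro hh; rw [← hπb, ← hh]; exact (Equiv.Perm.apply_inv_self π q).symm
      · intro hh; rw [hh]
    by_cases hex : ∃ e, e < a ∧ min (π a) (π b) < π e ∧ π e < max (π a) (π b)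
    · -- a sylvester move applies
      have hrel : SylvRelT π (π * Equiv.swap a b) := by
        refine ⟨a, b, hcov, rfl, ?_, hex⟩
        rw [hπa, hπb]; exact hblk
      have hIE : InvEq π (π * Equiv.swap a b) := invEq_of_sylvRel hrel
      have hInv'' : InvEq (π * Equiv.swap a b) π' :=
        ⟨fun q q' h => (hIE.1 q q' h).symm.trans (hInv.1 q q' h),
         fun s i => (hIE.2 s i).symm.trans (hInv.2 s i)⟩
      have hsub : Dset (π * Equiv.swap a b) π' ⊆ (Dset π π').erase (x, y) := by
        intro p hp
        obtain ⟨hp1, hp2⟩ := mem_Dset.mp hp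
        rw [hpos, hpos] at hp1
        by_cases hc1 : p.1 = x ∧ p.2 = y
        · rw [(hinvq p.1).mpr hc1.1, (hinvq' p.2).mpr hc1.2, Equiv.swap_apply_left,
            Equiv.swap_apply_right] at hp1
          exact absurd (hab.trans hp1) (lt_irrefl a)
        by_cases hc2 : p.1 = y ∧ p.2 = x
        · rw [hc2.1, hc2.2] at hp2
          exact absurd (hp2.trans hba') (lt_irrefl _)
        have hcmp : Equiv.swap a b (π⁻¹ p.1) < Equiv.swap a b (π⁻¹ p.2) ↔
            π⁻¹ p.1 < π⁻¹ p.2 := aux_swap_cmp hcov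
          (fun hh => hc1 ⟨(hinvq _).mp hh.1, (hinvq' _).mp hh.2⟩)
          (fun hh => hc2 ⟨(hinvq' _).mp hh.1, (hinvq _).mp hh.2⟩)
        refine Finset.mem_erase.mpr ⟨?_, mem_Dset.mpr ⟨hcmp.mp hp1, hp2⟩⟩
        intro hh
        exact hc1 ⟨congrArg Prod.fst hh, congrArg Prod.snd hh⟩
      have hcard'' : (Dset (π * Equiv.swap a b) π').card ≤ N := by
        have h1 := Finset.card_le_card hsub
        rw [Finset.card_erase_of_mem hp0] at h1
        omega
      exact Relation.EqvGen.trans _ _ _ (Relation.EqvGen.rel _ _ hrel)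
        (ih _ _ hInv'' hcard'')
    · -- no witness: contradicts equality of the next-smaller maps
      exfalso
      rcases lt_or_gt_of_ne hixy with hlt | hgt
      · -- ix < iy
        have hmm : min (π a) (π b) = x ∧ max (π a) (π b) = y := by
          rw [hπa, hπb]
          have : x < y := by rw [hxX, hyY]; exact aux_lex_lt_same.mpr hlt
          exact ⟨min_eq_left this.le, max_eq_right this.le⟩
        have key1 : NS (Rord π') sx ix ≤ Fin.castSucc iy := by
          apply Finset.min'_le
          refine mem_NSset.mpr ⟨Fin.castSucc_lt_castSucc_iff.mpr hlt, Or.inr ⟨iy, rfl, ?_⟩⟩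
          unfold Rord
          rw [← hxX, ← hyY]
          exact hba'
        have key2 : Fin.castSucc iy < NS (Rord π) sx ix := by
          have hall : ∀ j ∈ NSset (Rord π) sx ix, Fin.castSucc iy < j := by
            intro j hj
            obtain ⟨hj1, hj2⟩ := mem_NSset.mp hj
            rcases hj2 with rfl | ⟨j', hj'c, hF⟩
            · exact Fin.castSucc_lt_last iy
            · unfold Rord at hF
              rw [← hxX] at hF
              rcases lt_trichotomy j' iy with h' | h' | h'
              · exfalso
                apply hex
                refine ⟨π⁻¹ (toLex ⟨sx, j'⟩), hF, ?_, ?_⟩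
                · rw [hmm.1, Equiv.Perm.apply_inv_self, hxX]
                  exact aux_lex_lt_same.mpr
                    (Fin.castSucc_lt_castSucc_iff.mp (hj'c ▸ hj1))
                · rw [hmm.2, Equiv.Perm.apply_inv_self, hyY]
                  exact aux_lex_lt_same.mpr h'
              · subst h'
                rw [← hyY] at hF
                exact absurd (hF.trans hab) (lt_irrefl _)
              · rw [← hj'c]
                exact Fin.castSucc_lt_castSucc_iff.mpr h'
          exact hall _ (Finset.min'_mem _ _)
        rw [hInv.2 sx ix] at key2
        exact absurd key1 (not_le.mpr key2)
      · -- iy < ix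
        have hmm : min (π a) (π b) = y ∧ max (π a) (π b) = x := by
          rw [hπa, hπb]
          have : y < x := by rw [hxX, hyY]; exact aux_lex_lt_same.mpr hgt
          exact ⟨min_eq_right this.le, max_eq_left this.le⟩
        have claim1 : NS (Rord π) sx iy = Fin.castSucc ix := by
          have hmem : Fin.castSucc ix ∈ NSset (Rord π) sx iy := by
            refine mem_NSset.mpr ⟨Fin.castSucc_lt_castSucc_iff.mpr hgt, Or.inr ⟨ix, rfl, ?_⟩⟩
            unfold Rord
            rw [← hxX, ← hyY]
            exact hab
          apply le_antisymm (Finset.min'_le _ _ hmem)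
          apply Finset.le_min'
          intro j hj
          obtain ⟨hj1, hj2⟩ := mem_NSset.mp hj
          rcases hj2 with rfl | ⟨j', hj'c, hF⟩
          · exact Fin.le_last _
          · unfold Rord at hF
            rw [← hyY] at hF
            have hiyj' : iy < j' := Fin.castSucc_lt_castSucc_iff.mp (hj'c ▸ hj1)
            rcases lt_trichotomy j' ix with h' | h' | h'
            · exfalso
              apply hex
              have hne_a : π⁻¹ (toLex ⟨sx, j'⟩) ≠ a := by
                intro hh
                obtain ⟨-, hh2⟩ := Sigma.mk.inj_iff.mp
                  (toLex.injective (((hinvq _).mp hh).trans hxX))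
                exact h'.ne (eq_of_heq hh2)
              have hne_b : π⁻¹ (toLex ⟨sx, j'⟩) ≠ b := by
                intro hh
                obtain ⟨-, hh2⟩ := Sigma.mk.inj_iff.mp
                  (toLex.injective (((hinvq' _).mp hh).trans hyY))
                exact hiyj'.ne' (eq_of_heq hh2)
              have hea : π⁻¹ (toLex ⟨sx, j'⟩) < a :=
                (aux_cov_lt_left hcov hne_a hne_b).mpr hF
              refine ⟨π⁻¹ (toLex ⟨sx, j'⟩), hea, ?_, ?_⟩
              · rw [hmm.1, Equiv.Perm.apply_inv_self, hyY]
                exact aux_lex_lt_same.mpr hiyj'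
              · rw [hmm.2, Equiv.Perm.apply_inv_self, hxX]
                exact aux_lex_lt_same.mpr h'
            · rw [← hj'c, h']
            · rw [← hj'c]
              exact Fin.castSucc_le_castSucc_iff.mpr h'.le
        have claim2 : NS (Rord π') sx iy ≠ Fin.castSucc ix := by
          intro hEq
          have hmem := Finset.min'_mem (NSset (Rord π') sx iy) (NSset_nonempty _ _ _)
          rw [show (NSset (Rord π') sx iy).min' (NSset_nonempty _ _ _) = NS (Rord π') sx iy
            from rfl, hEq] at hmem
          obtain ⟨-, h2⟩ := mem_NSset.mp hmem
          rcases h2 with h2 | ⟨j', hc, hF⟩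
          · exact (Fin.castSucc_lt_last ix).ne h2
          · have : j' = ix := Fin.castSucc_injective _ hc
            subst this
            unfold Rord at hF
            rw [← hxX, ← hyY] at hF
            exact absurd hF (not_lt.mpr hba'.le)
        rw [hInv.2 sx iy, claim1] at *
        exact claim2 claim1

end Complete

section Wrap
variable {t : ℕ} {m : Fin t → ℕ}

lemma invEq_refl (π : Equiv.Perm (QL t m)) : InvEq π π :=
  ⟨fun _ _ _ => Iff.rfl, fun _ _ => rfl⟩

lemma invEq_symm {π π' : Equiv.Perm (QL t m)} (h : InvEq π π') : InvEq π' π :=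
  ⟨fun q q' hq => (h.1 q q' hq).symm, fun s i => (h.2 s i).symm⟩

lemma invEq_trans {π π' π'' : Equiv.Perm (QL t m)} (h : InvEq π π')
    (h' : InvEq π' π'') : InvEq π π'' :=
  ⟨fun q q' hq => (h.1 q q' hq).trans (h'.1 q q' hq),
   fun s i => (h.2 s i).trans (h'.2 s i)⟩

lemma sylvT_iff_invEq {π π' : Equiv.Perm (QL t m)} : SylvT π π' ↔ InvEq π π' := by
  constructor
  · intro h
    induction h with
    | rel _ _ hr => exact invEq_of_sylvRel hr
    | refl _ => exact invEq_refl _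
    | symm _ _ _ ih => exact invEq_symm ih
    | trans _ _ _ _ _ ih1 ih2 => exact invEq_trans ih1 ih2
  · intro h
    exact sylvT_of_invEq_aux (Dset π π').card π π' h le_rfl

end Wrap



section Geo

variable {n d : ℕ} {u : Fin n → EuclideanSpace ℝ (Fin d)} {c ω : EuclideanSpace ℝ (Fin d)}

lemma aux_formA {x y z C1 C2 : ℝ} (h1 : 0 < C1) (h2 : 0 < C2)
    (hid : z * (C1 + C2) = x * C1 + y * C2) (hxz : x < z) : z < y := by nlinarith

lemma aux_formB {x y z C1 C2 : ℝ} (h1 : 0 < C1) (h2 : 0 < C2)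
    (hid : z * (C1 + C2) = x * C1 + y * C2) (hzx : z < x) : y < x := by nlinarith

lemma aux_Cpos (hc : ∀ i j : Fin n, i < j → ⟪c, u i⟫ < ⟪c, u j⟫) {i j : Fin n}
    (hij : i < j) : 0 < ⟪c, u j - u i⟫ := by
  rw [inner_sub_right]
  exact sub_pos.mpr (hc i j hij)

lemma aux_rho_mul (hc : ∀ i j : Fin n, i < j → ⟪c, u i⟫ < ⟪c, u j⟫) {i j : Fin n}
    (hij : i < j) : rho u c ω i j * ⟪c, u j - u i⟫ = ⟪ω, u j - u i⟫ :=
  div_mul_cancel₀ _ (aux_Cpos hc hij).ne'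

lemma aux_convex (hc : ∀ i j : Fin n, i < j → ⟪c, u i⟫ < ⟪c, u j⟫) {i j k : Fin n}
    (h1 : i < j) (h2 : j < k) :
    rho u c ω i k * (⟪c, u j - u i⟫ + ⟪c, u k - u j⟫) =
      rho u c ω i j * ⟪c, u j - u i⟫ + rho u c ω j k * ⟪c, u k - u j⟫ := by
  have hsum : ⟪c, u j - u i⟫ + ⟪c, u k - u j⟫ = ⟪c, u k - u i⟫ := by
    rw [inner_sub_right, inner_sub_right, inner_sub_right]
    ring
  rw [hsum, aux_rho_mul hc (h1.trans h2), aux_rho_mul hc h1, aux_rho_mul hc h2,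
    inner_sub_right, inner_sub_right, inner_sub_right]
  ring

lemma aux_tau_finite (i : Fin n) :
    {x : ℝ | ∃ j : Fin n, i < j ∧ x = rho u c ω i j}.Finite :=
  Set.Finite.subset (Set.finite_range (fun j => rho u c ω i j))
    (by rintro x ⟨j, hj, rfl⟩; exact ⟨j, rfl⟩)

lemma aux_le_tau {i j : Fin n} (hij : i < j) : rho u c ω i j ≤ tau u c ω i :=
  le_csSup (aux_tau_finite i).bddAbove ⟨j, hij, rfl⟩

lemma aux_tau_mem {i : Fin n} (hex : ∃ j, i < j) :
    ∃ j, i < j ∧ tau u c ω i = rho u c ω i j := by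
  obtain ⟨j0, hj0⟩ := hex
  have hne : {x : ℝ | ∃ j : Fin n, i < j ∧ x = rho u c ω i j}.Nonempty :=
    ⟨rho u c ω i j0, j0, hj0, rfl⟩
  exact Set.Nonempty.csSup_mem hne (aux_tau_finite i)

lemma aux_S1a (hc : ∀ i j : Fin n, i < j → ⟪c, u i⟫ < ⟪c, u j⟫) {i j0 : Fin n}
    (hj0 : i < j0) (hj0' : rho u c ω i j0 = tau u c ω i)
    (hU : ∀ j, i < j → rho u c ω i j = tau u c ω i → j = j0)
    {k : Fin n} (hik : i < k) (hkj0 : k < j0) : tau u c ω i < tau u c ω k := by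
  have hlt : rho u c ω i k < tau u c ω i :=
    lt_of_le_of_ne (aux_le_tau hik) (fun h => hkj0.ne (hU k hik h))
  rw [← hj0'] at hlt
  have hy := aux_formA (aux_Cpos hc hik) (aux_Cpos (u := u) hc hkj0)
    (aux_convex hc hik hkj0) hlt
  rw [hj0'] at hy
  exact hy.trans_le (aux_le_tau hkj0)

lemma aux_S1b (hc : ∀ i j : Fin n, i < j → ⟪c, u i⟫ < ⟪c, u j⟫) {i j0 : Fin n}
    (hj0 : i < j0) (hj0' : rho u c ω i j0 = tau u c ω i)
    (hU : ∀ j, i < j → rho u c ω i j = tau u c ω i → j = j0)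
    (hex2 : ∃ l, j0 < l) : tau u c ω j0 < tau u c ω i := by
  obtain ⟨l, hl, htl⟩ := aux_tau_mem (u := u) (c := c) (ω := ω) hex2
  have hil : i < l := hj0.trans hl
  have hlt : rho u c ω i l < tau u c ω i :=
    lt_of_le_of_ne (aux_le_tau hil) (fun h => hl.ne' (hU l hil h))
  rw [← hj0'] at hlt
  have hy := aux_formB (aux_Cpos (u := u) hc hj0) (aux_Cpos (u := u) hc hl)
    (aux_convex hc hj0 hl) hlt
  rw [htl, ← hj0']
  exact hy

end Geo


section ProdAux

variable {t : ℕ} {m d : Fin t → ℕ}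
  {u : ∀ s : Fin t, Fin (m s + 1) → EuclideanSpace ℝ (Fin (d s))}
  {c ω : ∀ s : Fin t, EuclideanSpace ℝ (Fin (d s))}

/-- the vertex of the product all whose coordinates are maximal except the
`s`-th one, which equals `i`. -/
def vtx (m : Fin t → ℕ) (s : Fin t) (i : Fin (m s)) : ∀ r, Fin (m r + 1) :=
  Function.update (topVertex m) s (Fin.castSucc i)

lemma vtx_self {s : Fin t} {i : Fin (m s)} : vtx m s i s = Fin.castSucc i :=
  Function.update_self _ _ _

lemma vtx_other {s : Fin t} {i : Fin (m s)} {r : Fin t} (h : r ≠ s) :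
    vtx m s i r = Fin.last (m r) :=
  Function.update_of_ne h _ _

lemma vtx_ne_top {s : Fin t} {i : Fin (m s)} : vtx m s i ≠ topVertex m := by
  intro h
  have h2 := congrFun h s
  rw [vtx_self] at h2
  exact (Fin.castSucc_lt_last i).ne h2

lemma prodTau_vtx {s : Fin t} {i : Fin (m s)} :
    prodTau u c ω (vtx m s i) = tau (u s) (c s) (ω s) (Fin.castSucc i) := by
  unfold prodTau tau
  apply congrArg sSup
  ext x
  constructor
  · rintro ⟨r, j, hj, rfl⟩
    by_cases hr : r = s
    · subst hr
      rw [vtx_self] at hj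
      exact ⟨j, hj, by rw [vtx_self]⟩
    · rw [vtx_other hr] at hj
      exact absurd hj (not_lt.mpr (Fin.le_last j))
  · rintro ⟨j, hj, rfl⟩
    exact ⟨s, j, by rw [vtx_self]; exact hj, by rw [vtx_self]⟩

lemma aux_hfac (hω : ProdGeneric u c ω) (s : Fin t) (i : Fin (m s)) :
    ∃! j : Fin (m s + 1), Fin.castSucc i < j ∧
      rho (u s) (c s) (ω s) (Fin.castSucc i) j =
        tau (u s) (c s) (ω s) (Fin.castSucc i) := by
  obtain ⟨p, ⟨hp1, hp2⟩, hpu⟩ := hω (vtx m s i) vtx_ne_top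
  obtain ⟨r, j⟩ := p
  have hps : r = s := by
    by_contra h
    rw [vtx_other h] at hp1
    exact absurd hp1 (not_lt.mpr (Fin.le_last _))
  subst hps
  rw [vtx_self] at hp1
  rw [vtx_self, prodTau_vtx] at hp2
  refine ⟨j, ⟨hp1, hp2⟩, ?_⟩
  rintro j' ⟨h1, h2⟩
  have h3 := hpu ⟨r, j'⟩ ⟨by rw [vtx_self]; exact h1, by rw [vtx_self, prodTau_vtx]; exact h2⟩
  obtain ⟨-, hh⟩ := Sigma.mk.inj_iff.mp h3
  exact eq_of_heq hh

lemma aux_CHAR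
    (hc : ∀ s : Fin t, ∀ i j : Fin (m s + 1), i < j → ⟪c s, u s i⟫ < ⟪c s, u s j⟫)
    (hω : ProdStronglyGeneric u c ω)
    {A : (∀ s : Fin t, Fin (m s + 1)) → ∀ s : Fin t, Fin (m s + 1)}
    (hA : ProdIsArbo u c ω A)
    (v : ∀ s : Fin t, Fin (m s + 1)) (hv : v ≠ topVertex m)
    (s : Fin t) (i : Fin (m s)) (hvs : v s = Fin.castSucc i)
    (hmax : ∀ (r : Fin t) (k : Fin (m r)), v r = Fin.castSucc k →
      prodTheta u c ω (toLex ⟨r, k⟩) ≤ prodTheta u c ω (toLex ⟨s, i⟩)) :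
    (∀ r, r ≠ s → A v r = v r) ∧ Fin.castSucc i < A v s ∧
      rho (u s) (c s) (ω s) (Fin.castSucc i) (A v s) =
        tau (u s) (c s) (ω s) (Fin.castSucc i) := by
  obtain ⟨s₀, h1, h2, h3⟩ := hA.2 v hv
  obtain ⟨p, hp, hpu⟩ := hω.1 v hv
  have htv : prodTau u c ω v = tau (u s) (c s) (ω s) (Fin.castSucc i) := by
    apply le_antisymm
    · unfold prodTau
      apply csSup_le
      · exact ⟨rho (u s₀) (c s₀) (ω s₀) (v s₀) (A v s₀), s₀, A v s₀, h1, rfl⟩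
      rintro x ⟨r, j, hj, rfl⟩
      have hrl : v r ≠ Fin.last (m r) := (hj.trans_le (Fin.le_last j)).ne
      have hk := Fin.castSucc_castPred (v r) hrl
      calc rho (u r) (c r) (ω r) (v r) j ≤ tau (u r) (c r) (ω r) (v r) := aux_le_tau hj
        _ = prodTheta u c ω (toLex ⟨r, (v r).castPred hrl⟩) :=
          (congrArg (tau (u r) (c r) (ω r)) hk).symm
        _ ≤ prodTheta u c ω (toLex ⟨s, i⟩) := hmax r _ hk.symm
        _ = tau (u s) (c s) (ω s) (Fin.castSucc i) := rfl
    · obtain ⟨j, hj, hje⟩ := aux_tau_mem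
        (u := u s) (c := c s) (ω := ω s) ⟨Fin.last (m s), Fin.castSucc_lt_last i⟩
      rw [hje]
      have hfin : {x : ℝ | ∃ r, ∃ j : Fin (m r + 1), v r < j ∧
          x = rho (u r) (c r) (ω r) (v r) j}.Finite :=
        Set.Finite.subset (Set.finite_range
          (fun p : (r : Fin t) × Fin (m r + 1) => rho (u p.1) (c p.1) (ω p.1) (v p.1) p.2))
          (by rintro x ⟨r, j', hj', rfl⟩; exact ⟨⟨r, j'⟩, rfl⟩)
      exact le_csSup hfin.bddAbove ⟨s, j, by rw [hvs]; exact hj, by rw [hvs]⟩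
  have e1 : (⟨s₀, A v s₀⟩ : (r : Fin t) × Fin (m r + 1)) = p := hpu _ ⟨h1, h3⟩
  obtain ⟨jst, ⟨hjst1, hjst2⟩, -⟩ := aux_hfac hω.1 s i
  have e2 : (⟨s, jst⟩ : (r : Fin t) × Fin (m r + 1)) = p :=
    hpu _ ⟨by rw [hvs]; exact hjst1, by rw [hvs, hjst2, htv]⟩
  obtain ⟨hs0, -⟩ := Sigma.mk.inj_iff.mp (e1.trans e2.symm)
  subst hs0
  rw [hvs] at h1 h3
  rw [htv] at h3
  exact ⟨h2, h1, h3⟩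

lemma aux_CHAR_vtx
    (hc : ∀ s : Fin t, ∀ i j : Fin (m s + 1), i < j → ⟪c s, u s i⟫ < ⟪c s, u s j⟫)
    (hω : ProdStronglyGeneric u c ω)
    {A : (∀ s : Fin t, Fin (m s + 1)) → ∀ s : Fin t, Fin (m s + 1)}
    (hA : ProdIsArbo u c ω A) (s : Fin t) (i : Fin (m s)) :
    Fin.castSucc i < A (vtx m s i) s ∧
      rho (u s) (c s) (ω s) (Fin.castSucc i) (A (vtx m s i) s) =
        tau (u s) (c s) (ω s) (Fin.castSucc i) := by
  refine (aux_CHAR hc hω hA (vtx m s i) vtx_ne_top s i vtx_self ?_).2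
  intro r k hrk
  by_cases hr : r = s
  · subst hr
    rw [vtx_self] at hrk
    have : k = i := Fin.castSucc_injective _ hrk.symm
    subst this
    exact le_rfl
  · rw [vtx_other hr] at hrk
    exact absurd hrk.symm (Fin.castSucc_lt_last k).ne

lemma aux_NS_char
    (hc : ∀ s : Fin t, ∀ i j : Fin (m s + 1), i < j → ⟪c s, u s i⟫ < ⟪c s, u s j⟫)
    (hω : ProdStronglyGeneric u c ω)
    {A : (∀ s : Fin t, Fin (m s + 1)) → ∀ s : Fin t, Fin (m s + 1)}
    (hA : ProdIsArbo u c ω A) (s : Fin t) (i : Fin (m s)) :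
    NS (fun q q' : QL t m => prodTheta u c ω q < prodTheta u c ω q') s i =
      A (vtx m s i) s := by
  obtain ⟨hj0, hj0'⟩ := aux_CHAR_vtx hc hω hA s i
  obtain ⟨jst, hjst, hu⟩ := aux_hfac hω.1 s i
  have hU : ∀ j, Fin.castSucc i < j →
      rho (u s) (c s) (ω s) (Fin.castSucc i) j =
        tau (u s) (c s) (ω s) (Fin.castSucc i) → j = A (vtx m s i) s := by
    intro j hj1 hj2
    rw [hu j ⟨hj1, hj2⟩, ← hu (A (vtx m s i) s) ⟨hj0, hj0'⟩]
  apply le_antisymm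
  · apply Finset.min'_le
    refine mem_NSset.mpr ⟨hj0, ?_⟩
    by_cases hlast : A (vtx m s i) s = Fin.last (m s)
    · exact Or.inl hlast
    · refine Or.inr ⟨(A (vtx m s i) s).castPred hlast, Fin.castSucc_castPred _ _, ?_⟩
      show prodTheta u c ω (toLex ⟨s, (A (vtx m s i) s).castPred hlast⟩) <
        prodTheta u c ω (toLex ⟨s, i⟩)
      show tau (u s) (c s) (ω s) (Fin.castSucc ((A (vtx m s i) s).castPred hlast)) <
        tau (u s) (c s) (ω s) (Fin.castSucc i)
      rw [Fin.castSucc_castPred]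
      exact aux_S1b (hc s) hj0 hj0' hU
        ⟨Fin.last (m s), lt_of_le_of_ne (Fin.le_last _) hlast⟩
  · apply Finset.le_min'
    intro j hj
    by_contra hcon
    push_neg at hcon
    obtain ⟨h1, h2⟩ := mem_NSset.mp hj
    rcases h2 with rfl | ⟨j', hj'c, hF⟩
    · exact absurd hcon (not_lt.mpr (Fin.le_last _))
    · have hF' : tau (u s) (c s) (ω s) (Fin.castSucc j') <
          tau (u s) (c s) (ω s) (Fin.castSucc i) := hF
      have hik : Fin.castSucc i < Fin.castSucc j' := hj'c ▸ h1
      have hkj : Fin.castSucc j' < A (vtx m s i) s := hj'c ▸ hcon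
      exact absurd hF' (not_lt.mpr (aux_S1a (hc s) hj0 hj0' hU hik hkj).le)

end ProdAux

/-- for two weights strongly generic for the product, the product
arborescences agree if and only if the sorting permutations of the product
slope vectors are `(m_1, …, m_t)`-sylvester congruent. -/
theorem prod_arbo_eq_iff_sylv (t : ℕ) (ht : 1 ≤ t) (m d : Fin t → ℕ)
    (hm : ∀ s : Fin t, 1 ≤ m s) (hd : ∀ s : Fin t, 1 ≤ d s)
    (u : ∀ s : Fin t, Fin (m s + 1) → EuclideanSpace ℝ (Fin (d s)))
    (c : ∀ s : Fin t, EuclideanSpace ℝ (Fin (d s)))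
    (hc : ∀ s : Fin t, ∀ i j : Fin (m s + 1), i < j → ⟪c s, u s i⟫ < ⟪c s, u s j⟫)
    (ω ω' : ∀ s : Fin t, EuclideanSpace ℝ (Fin (d s)))
    (hω : ProdStronglyGeneric u c ω) (hω' : ProdStronglyGeneric u c ω')
    (A A' : (∀ s : Fin t, Fin (m s + 1)) → ∀ s : Fin t, Fin (m s + 1))
    (hA : ProdIsArbo u c ω A) (hA' : ProdIsArbo u c ω' A')
    (π π' : Equiv.Perm (Lex ((s : Fin t) × Fin (m s))))
    (hπ : StrictMono fun q => prodTheta u c ω (π q))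
    (hπ' : StrictMono fun q => prodTheta u c ω' (π' q)) :
    A = A' ↔ SylvT π π' := by
  classical
  have hcmp : ∀ q q' : QL t m, prodTheta u c ω q < prodTheta u c ω q' ↔ π⁻¹ q < π⁻¹ q' := by
    intro q q'
    have h := hπ.lt_iff_lt (a := π⁻¹ q) (b := π⁻¹ q')
    simpa only [Equiv.Perm.apply_inv_self] using h
  have hcmp' : ∀ q q' : QL t m,
      prodTheta u c ω' q < prodTheta u c ω' q' ↔ π'⁻¹ q < π'⁻¹ q' := by
    intro q q'
    have h := hπ'.lt_iff_lt (a := π'⁻¹ q) (b := π'⁻¹ q')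
    simpa only [Equiv.Perm.apply_inv_self] using h
  have hNS1 : ∀ (s : Fin t) (i : Fin (m s)), NS (Rord π) s i = A (vtx m s i) s := by
    intro s i
    rw [← aux_NS_char hc hω hA s i]
    exact NS_congr (fun q q' => (hcmp q q').symm) s i
  have hNS2 : ∀ (s : Fin t) (i : Fin (m s)), NS (Rord π') s i = A' (vtx m s i) s := by
    intro s i
    rw [← aux_NS_char hc hω' hA' s i]
    exact NS_congr (fun q q' => (hcmp' q q').symm) s i
  rw [show (SylvT π π') = InvEq π π' from propext sylvT_iff_invEq]
  constructor
  · -- A = A' implies the invariants agree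
    intro hAA
    constructor
    · -- cross-block comparisons
      intro q q' hqq'
      unfold Rord
      rw [← hcmp, ← hcmp']
      rcases hqe : ofLex q with ⟨r1, k1⟩
      rcases hq'e : ofLex q' with ⟨r2, k2⟩
      have hqQ : q = toLex ⟨r1, k1⟩ := congrArg toLex hqe
      have hq'Q : q' = toLex ⟨r2, k2⟩ := congrArg toLex hq'e
      have h12 : r1 ≠ r2 := by rw [hqe, hq'e] at hqq'; exact hqq'
      have h21 : r2 ≠ r1 := h12.symm
      rw [hqQ, hq'Q]
      set w : ∀ r : Fin t, Fin (m r + 1) :=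
        Function.update (Function.update (topVertex m) r1 (Fin.castSucc k1)) r2
          (Fin.castSucc k2) with hwdef
      have hw2 : w r2 = Fin.castSucc k2 := Function.update_self _ _ _
      have hw1 : w r1 = Fin.castSucc k1 := by
        rw [hwdef]
        rw [Function.update_of_ne h12, Function.update_self]
      have hwo : ∀ r, r ≠ r1 → r ≠ r2 → w r = Fin.last (m r) := by
        intro r hr1 hr2
        rw [hwdef, Function.update_of_ne hr2, Function.update_of_ne hr1]
        rfl
      have hwt : w ≠ topVertex m := by
        intro h
        have h2 := congrFun h r2
        rw [hw2] at h2
        exact (Fin.castSucc_lt_last k2).ne h2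
      -- the four characterizations of the arborescences at w
      have genA1 : prodTheta u c ω (toLex ⟨r1, k1⟩) < prodTheta u c ω (toLex ⟨r2, k2⟩) →
          A w r2 ≠ w r2 := by
        intro hl
        have hmaxw : ∀ (r : Fin t) (k : Fin (m r)), w r = Fin.castSucc k →
            prodTheta u c ω (toLex ⟨r, k⟩) ≤ prodTheta u c ω (toLex ⟨r2, k2⟩) := by
          intro r k hrk
          by_cases hr2 : r = r2
          · subst hr2
            rw [hw2] at hrk
            have : k = k2 := Fin.castSucc_injective _ hrk.symm
            subst this; exact le_rfl
          by_cases hr1 : r = r1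
          · subst hr1
            rw [hw1] at hrk
            have : k = k1 := Fin.castSucc_injective _ hrk.symm
            subst this; exact hl.le
          · rw [hwo r hr1 hr2] at hrk
            exact absurd hrk.symm (Fin.castSucc_lt_last k).ne
        have := (aux_CHAR hc hω hA w hwt r2 k2 hw2 hmaxw).2.1
        rw [← hw2] at this
        exact this.ne'
      have genA2 : prodTheta u c ω (toLex ⟨r2, k2⟩) < prodTheta u c ω (toLex ⟨r1, k1⟩) →
          A w r2 = w r2 := by
        intro hl
        have hmaxw : ∀ (r : Fin t) (k : Fin (m r)), w r = Fin.castSucc k →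
            prodTheta u c ω (toLex ⟨r, k⟩) ≤ prodTheta u c ω (toLex ⟨r1, k1⟩) := by
          intro r k hrk
          by_cases hr1 : r = r1
          · subst hr1
            rw [hw1] at hrk
            have : k = k1 := Fin.castSucc_injective _ hrk.symm
            subst this; exact le_rfl
          by_cases hr2 : r = r2
          · subst hr2
            rw [hw2] at hrk
            have : k = k2 := Fin.castSucc_injective _ hrk.symm
            subst this; exact hl.le
          · rw [hwo r hr1 hr2] at hrk
            exact absurd hrk.symm (Fin.castSucc_lt_last k).ne
        exact (aux_CHAR hc hω hA w hwt r1 k1 hw1 hmaxw).1 r2 h21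
      have genB1 : prodTheta u c ω' (toLex ⟨r1, k1⟩) < prodTheta u c ω' (toLex ⟨r2, k2⟩) →
          A' w r2 ≠ w r2 := by
        intro hl
        have hmaxw : ∀ (r : Fin t) (k : Fin (m r)), w r = Fin.castSucc k →
            prodTheta u c ω' (toLex ⟨r, k⟩) ≤ prodTheta u c ω' (toLex ⟨r2, k2⟩) := by
          intro r k hrk
          by_cases hr2 : r = r2
          · subst hr2
            rw [hw2] at hrk
            have : k = k2 := Fin.castSucc_injective _ hrk.symm
            subst this; exact le_rfl
          by_cases hr1 : r = r1
          · subst hr1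
            rw [hw1] at hrk
            have : k = k1 := Fin.castSucc_injective _ hrk.symm
            subst this; exact hl.le
          · rw [hwo r hr1 hr2] at hrk
            exact absurd hrk.symm (Fin.castSucc_lt_last k).ne
        have := (aux_CHAR hc hω' hA' w hwt r2 k2 hw2 hmaxw).2.1
        rw [← hw2] at this
        exact this.ne'
      have genB2 : prodTheta u c ω' (toLex ⟨r2, k2⟩) < prodTheta u c ω' (toLex ⟨r1, k1⟩) →
          A' w r2 = w r2 := by
        intro hl
        have hmaxw : ∀ (r : Fin t) (k : Fin (m r)), w r = Fin.castSucc k →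
            prodTheta u c ω' (toLex ⟨r, k⟩) ≤ prodTheta u c ω' (toLex ⟨r1, k1⟩) := by
          intro r k hrk
          by_cases hr1 : r = r1
          · subst hr1
            rw [hw1] at hrk
            have : k = k1 := Fin.castSucc_injective _ hrk.symm
            subst this; exact le_rfl
          by_cases hr2 : r = r2
          · subst hr2
            rw [hw2] at hrk
            have : k = k2 := Fin.castSucc_injective _ hrk.symm
            subst this; exact hl.le
          · rw [hwo r hr1 hr2] at hrk
            exact absurd hrk.symm (Fin.castSucc_lt_last k).ne
        exact (aux_CHAR hc hω' hA' w hwt r1 k1 hw1 hmaxw).1 r2 h21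
      have hqqne : (toLex (⟨r1, k1⟩ : (s : Fin t) × Fin (m s)) : QL t m) ≠ toLex ⟨r2, k2⟩ := by
        intro h
        exact h12 (congrArg (fun z : QL t m => (ofLex z).1) h)
      constructor
      · intro hlt
        by_contra hcon
        have hgt' : prodTheta u c ω' (toLex ⟨r2, k2⟩) < prodTheta u c ω' (toLex ⟨r1, k1⟩) :=
          lt_of_le_of_ne (not_lt.mp hcon) (fun h => hqqne (hω'.2 h).symm)
        have e1 := genA1 hlt
        have e2 := genB2 hgt'
        rw [hAA] at e1
        exact e1 e2
      · intro hlt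
        by_contra hcon
        have hgt : prodTheta u c ω (toLex ⟨r2, k2⟩) < prodTheta u c ω (toLex ⟨r1, k1⟩) :=
          lt_of_le_of_ne (not_lt.mp hcon) (fun h => hqqne (hω.2 h).symm)
        have e1 := genB1 hlt
        have e2 := genA2 hgt
        rw [← hAA] at e1
        exact e1 e2
    · -- next-smaller maps
      intro s i
      rw [hNS1 s i, hNS2 s i, hAA]
  · -- the invariants determine the arborescence
    rintro ⟨hcross, hNSeq⟩
    have haa : ∀ (s : Fin t) (i : Fin (m s)), A (vtx m s i) s = A' (vtx m s i) s := by
      intro s i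
      rw [← hNS1 s i, hNSeq s i, hNS2 s i]
    have hcrossΘ : ∀ q q' : QL t m, (ofLex q).1 ≠ (ofLex q').1 →
        (prodTheta u c ω q < prodTheta u c ω q' ↔
          prodTheta u c ω' q < prodTheta u c ω' q') := by
      intro q q' h
      rw [hcmp, hcmp']
      exact hcross q q' h
    funext v
    by_cases hv : v = topVertex m
    · rw [hv, hA.1, hA'.1]
    obtain ⟨s1, hs1⟩ := Function.ne_iff.mp hv
    set Lv : Finset (QL t m) :=
      Finset.univ.filter (fun q => v (ofLex q).1 = Fin.castSucc (ofLex q).2) with hLv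
    have hLvne : Lv.Nonempty :=
      ⟨toLex ⟨s1, (v s1).castPred hs1⟩,
        Finset.mem_filter.mpr ⟨Finset.mem_univ _, (Fin.castSucc_castPred (v s1) hs1).symm⟩⟩
    obtain ⟨qm, hqmem, hqmax⟩ := Lv.exists_max_image (fun q => prodTheta u c ω q) hLvne
    rcases hqe : ofLex qm with ⟨sm, im⟩
    have hvm : v sm = Fin.castSucc im := by
      have h := (Finset.mem_filter.mp hqmem).2
      rw [hqe] at h
      exact h
    have hmaxω : ∀ (r : Fin t) (k : Fin (m r)), v r = Fin.castSucc k →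
        prodTheta u c ω (toLex ⟨r, k⟩) ≤ prodTheta u c ω (toLex ⟨sm, im⟩) := by
      intro r k hrk
      have hmem : (toLex ⟨r, k⟩ : QL t m) ∈ Lv :=
        Finset.mem_filter.mpr ⟨Finset.mem_univ _, hrk⟩
      have h := hqmax _ hmem
      rwa [show qm = toLex ⟨sm, im⟩ from congrArg toLex hqe] at h
    have hmaxω' : ∀ (r : Fin t) (k : Fin (m r)), v r = Fin.castSucc k →
        prodTheta u c ω' (toLex ⟨r, k⟩) ≤ prodTheta u c ω' (toLex ⟨sm, im⟩) := by
      intro r k hrk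
      by_cases hr : r = sm
      · subst hr
        have : k = im := Fin.castSucc_injective _ (hrk.symm.trans hvm)
        subst this; exact le_rfl
      · have hne : (toLex (⟨r, k⟩ : (s : Fin t) × Fin (m s)) : QL t m) ≠ toLex ⟨sm, im⟩ :=
          fun h => hr (congrArg (fun z : QL t m => (ofLex z).1) h)
        have hltΘ : prodTheta u c ω (toLex ⟨r, k⟩) < prodTheta u c ω (toLex ⟨sm, im⟩) :=
          lt_of_le_of_ne (hmaxω r k hrk) (fun h => hne (hω.2 h))
        exact ((hcrossΘ (toLex ⟨r, k⟩) (toLex ⟨sm, im⟩) hr).mp hltΘ).le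
    have hch := aux_CHAR hc hω hA v hv sm im hvm hmaxω
    have hch' := aux_CHAR hc hω' hA' v hv sm im hvm hmaxω'
    funext r
    by_cases hr : r = sm
    · subst hr
      have h1 : A v r = A (vtx m r im) r := by
        obtain ⟨jst, hjst, hu⟩ := aux_hfac hω.1 r im
        rw [hu _ ⟨hch.2.1, hch.2.2⟩,
          ← hu _ ⟨(aux_CHAR_vtx hc hω hA r im).1, (aux_CHAR_vtx hc hω hA r im).2⟩]
      have h2 : A' v r = A' (vtx m r im) r := by
        obtain ⟨jst, hjst, hu⟩ := aux_hfac hω'.1 r im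
        rw [hu _ ⟨hch'.2.1, hch'.2.2⟩,
          ← hu _ ⟨(aux_CHAR_vtx hc hω' hA' r im).1, (aux_CHAR_vtx hc hω' hA' r im).2⟩]
      rw [h1, h2, haa r im]
    · rw [hch.1 r hr, hch'.1 r hr]
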